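/- For any graph G of order n ≥ k ≥ 3, the product κ_k(G) · κ_k(Ḡ) satisfies 0 ≤ κ_k(G) · κ_k(Ḡ) ≤ ((n − ⌈k/2⌉)/2)². -/

import Mathlib

open SimpleGraph

variable {V : Type*}

/-- An `S`-Steiner tree in `G`: a subgraph of `G` that is a tree and contains all of `S`. -/
def IsSteinerTree (G : SimpleGraph V) (S : Set V) (T : G.Subgraph) : Prop :=
  S ⊆ T.verts ∧ T.coe.IsTree

/-- The maximum number of pairwise edge-disjoint `S`-Steiner trees in `G`. -/
noncomputable def steinerEdgeConn (G : SimpleGraph V) (S : Set V) : ℕ :=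
  sSup {n : ℕ | ∃ f : Fin n → G.Subgraph, (∀ i, IsSteinerTree G S (f i)) ∧
    ∀ i j, i ≠ j → Disjoint (f i).edgeSet (f j).edgeSet}

/-- The maximum number of pairwise internally disjoint `S`-Steiner trees in `G`. -/
noncomputable def steinerConn (G : SimpleGraph V) (S : Set V) : ℕ :=
  sSup {n : ℕ | ∃ f : Fin n → G.Subgraph, (∀ i, IsSteinerTree G S (f i)) ∧
    ∀ i j, i ≠ j → Disjoint (f i).edgeSet (f j).edgeSet ∧
      (f i).verts ∩ (f j).verts = S}

/-- The generalized `k`-edge-connectivity `λ_k(G)`. -/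
noncomputable def genEdgeConn (G : SimpleGraph V) (k : ℕ) : ℕ :=
  sInf {m : ℕ | ∃ S : Set V, S.ncard = k ∧ steinerEdgeConn G S = m}

/-- The generalized `k`-connectivity `κ_k(G)`. -/
noncomputable def genConn (G : SimpleGraph V) (k : ℕ) : ℕ :=
  sInf {m : ℕ | ∃ S : Set V, S.ncard = k ∧ steinerConn G S = m}

/-- The edge-connectivity `λ(G)`: the least size of a set of edges whose removal
disconnects the graph. -/
noncomputable def edgeConn (G : SimpleGraph V) : ℕ :=
  sInf {m : ℕ | ∃ M : Set (Sym2 V), M ⊆ G.edgeSet ∧ M.ncard = m ∧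
    ¬ (G.deleteEdges M).Connected}

/-- The vertex-connectivity `κ(G)`: the least size of a set of vertices whose removal
leaves a non-connected graph. -/
noncomputable def vertConn (G : SimpleGraph V) : ℕ :=
  sInf {m : ℕ | ∃ A : Set V, A.ncard = m ∧ ¬ (G.induce (Aᶜ : Set V)).Connected}


/-- The minimum degree `δ(G)` (as the least cardinality of a neighbor set). -/
noncomputable def minDeg (G : SimpleGraph V) : ℕ :=
  sInf {d : ℕ | ∃ v : V, (G.neighborSet v).ncard = d}


section NGaux

open SimpleGraph

/-- Lift a subgraph of `G` to a subgraph of `⊤`. -/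
def liftTop {G : SimpleGraph V} (T : G.Subgraph) : (⊤ : SimpleGraph V).Subgraph where
  verts := T.verts
  Adj := T.Adj
  adj_sub := fun h => by simpa using (T.adj_sub h).ne
  edge_vert := fun h => T.edge_vert h
  symm := T.symm

lemma liftTop_edgeSet {G : SimpleGraph V} (T : G.Subgraph) :
    (liftTop T).edgeSet = T.edgeSet := rfl

lemma liftTop_isSteinerTree {G : SimpleGraph V} {S : Set V} {T : G.Subgraph}
    (h : IsSteinerTree G S T) : IsSteinerTree ⊤ S (liftTop T) :=
  ⟨h.1, h.2⟩

/-- generic disjoint-sum counting -/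
lemma sum_ncard_le {α ι : Type*} [Fintype α] (s : Finset ι) (A : ι → Set α) (U : Set α)
    (hsub : ∀ i ∈ s, A i ⊆ U)
    (hdis : ∀ i ∈ s, ∀ j ∈ s, i ≠ j → Disjoint (A i) (A j)) :
    ∑ i ∈ s, (A i).ncard ≤ U.ncard := by
  classical
  calc ∑ i ∈ s, (A i).ncard = ∑ i ∈ s, ((Set.toFinite (A i)).toFinset.card) := by
        refine Finset.sum_congr rfl fun i _ => ?_
        exact Set.ncard_eq_toFinset_card _ _
    _ = (s.biUnion fun i => (Set.toFinite (A i)).toFinset).card := by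
        refine (Finset.card_biUnion ?_).symm
        intro i hi j hj hij
        exact (Set.Finite.disjoint_toFinset).mpr (hdis i hi j hj hij)
    _ ≤ (Set.toFinite U).toFinset.card := by
        refine Finset.card_le_card ?_
        intro e he
        simp only [Finset.mem_biUnion, Set.Finite.mem_toFinset] at he ⊢
        obtain ⟨i, hi, hei⟩ := he
        exact hsub i hi hei
    _ = U.ncard := (Set.ncard_eq_toFinset_card _ _).symm

end NGaux

section NG2
open SimpleGraph

lemma ncard_le_touching_of_tree [Fintype V] {G : SimpleGraph V} (T : G.Subgraph)
    (hT : T.coe.IsTree) {S : Set V} (hSv : S ⊆ T.verts) (hSfin : S.Finite)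
    {r : V} (hr : r ∈ T.verts) (hrS : r ∉ S) :
    S.ncard ≤ {e ∈ T.edgeSet | ∃ v ∈ e, v ∈ S}.ncard := by
  classical
  set A := {e ∈ T.edgeSet | ∃ v ∈ e, v ∈ S} with hA
  set rr : T.verts := ⟨r, hr⟩ with hrr
  have hC := hT.existsUnique_path
  let P : ∀ u : T.verts, T.coe.Walk u rr := fun u => (hC u rr).choose
  have hP : ∀ u, (P u).IsPath := fun u => (hC u rr).choose_spec.1
  have hPu : ∀ (u : T.verts) (q : T.coe.Walk u rr), q.IsPath → q = P u :=
    fun u q hq => ((hC u rr).choose_spec.2 q hq)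
  have hne : ∀ {s : V} (h : s ∈ S), (⟨s, hSv h⟩ : T.verts) ≠ rr := by
    intro s h hc
    apply hrS
    have hsr : s = r := congrArg Subtype.val hc
    rwa [hsr] at h
  let nxt : ∀ u : T.verts, u ≠ rr → T.verts :=
    fun u hu => (SimpleGraph.Walk.exists_eq_cons_of_ne hu (P u)).choose
  have hnxt : ∀ (u : T.verts) (hu : u ≠ rr), ∃ (h : T.coe.Adj u (nxt u hu))
      (p' : T.coe.Walk (nxt u hu) rr), P u = SimpleGraph.Walk.cons h p' :=
    fun u hu => (SimpleGraph.Walk.exists_eq_cons_of_ne hu (P u)).choose_spec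
  let F : V → Sym2 V := fun s =>
    if h : s ∈ S then s(s, (nxt ⟨s, hSv h⟩ (hne h) : T.verts).1) else s(s, s)
  have hmaps : ∀ s ∈ S, F s ∈ A := by
    intro s hs
    obtain ⟨hadj, q, hq⟩ := hnxt ⟨s, hSv hs⟩ (hne hs)
    have hTadj : T.Adj s (nxt ⟨s, hSv hs⟩ (hne hs) : T.verts).1 := hadj
    refine ⟨?_, ⟨s, ?_, hs⟩⟩
    · simp only [F, dif_pos hs]
      exact Subgraph.mem_edgeSet.mpr hTadj
    · simp only [F, dif_pos hs]
      exact Sym2.mem_mk_left _ _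
  have hinj : Set.InjOn F S := by
    intro s1 h1 s2 h2 heq
    by_contra hne12
    simp only [F, dif_pos h1, dif_pos h2] at heq
    rw [Sym2.eq_iff] at heq
    rcases heq with ⟨h, -⟩ | ⟨ha, hb⟩
    · exact hne12 h
    · -- ha : s1 = ↑(nxt u2 _) ; hb : ↑(nxt u1 _) = s2
      set u1 : T.verts := ⟨s1, hSv h1⟩ with hu1
      set u2 : T.verts := ⟨s2, hSv h2⟩ with hu2
      have hw1 : nxt u1 (hne h1) = u2 := Subtype.ext hb
      have hw2 : nxt u2 (hne h2) = u1 := Subtype.ext ha.symm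
      obtain ⟨hadj1, q1, hq1⟩ := hnxt u1 (hne h1)
      obtain ⟨hadj2, q2, hq2⟩ := hnxt u2 (hne h2)
      have hq1path : q1.IsPath ∧ u1 ∉ q1.support := by
        have := hP u1
        rw [hq1, SimpleGraph.Walk.cons_isPath_iff] at this
        exact this
      have hq1' : (q1.copy hw1 rfl).IsPath := by simpa using hq1path.1
      have hq1eq : q1.copy hw1 rfl = P u2 := hPu u2 _ hq1'
      have hmem : u1 ∈ q1.support := by
        have h1' : u1 ∈ (q1.copy hw1 rfl).support := by
          rw [hq1eq, hq2, SimpleGraph.Walk.support_cons]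
          right
          rw [← hw2]
          exact SimpleGraph.Walk.start_mem_support q2
        simpa using h1'
      exact hq1path.2 hmem
  have hfin : A.Finite := (Set.toFinite T.edgeSet).subset (Set.sep_subset _ _)
  exact Set.ncard_le_ncard_of_injOn F hmaps hinj hfin

lemma subgraph_tree_edge_count [Fintype V] {G : SimpleGraph V} (T : G.Subgraph)
    (hT : T.coe.IsTree) : T.edgeSet.ncard + 1 = T.verts.ncard := by
  classical
  haveI : Fintype T.verts := Fintype.ofFinite _
  haveI : Fintype T.coe.edgeSet := Fintype.ofFinite _
  have h1 : T.coe.edgeFinset.card + 1 = Fintype.card T.verts := hT.card_edgeFinset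
  have h2 : T.edgeSet.ncard = T.coe.edgeSet.ncard := by
    rw [← Subgraph.image_coe_edgeSet_coe]
    exact (Set.ncard_image_of_injective _ (Sym2.map.injective Subtype.val_injective))
  have h3 : T.coe.edgeSet.ncard = T.coe.edgeFinset.card := by
    rw [← Set.ncard_coe_finset, SimpleGraph.coe_edgeFinset]
  have h4 : T.verts.ncard = Fintype.card T.verts := by
    rw [Set.ncard_eq_toFinset_card', Set.toFinset_card]
  omega

end NG2

section NG3
open SimpleGraph

lemma key_count [Fintype V] {S : Set V} {k n t : ℕ}
    (hS : S.ncard = k) (hk : 3 ≤ k) (hn : Fintype.card V = n) (hkn : k ≤ n)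
    (f : Fin t → (⊤ : SimpleGraph V).Subgraph)
    (hst : ∀ i, IsSteinerTree ⊤ S (f i))
    (hdisj : ∀ i j : Fin t, i ≠ j → Disjoint (f i).edgeSet (f j).edgeSet) :
    2 * t + k ≤ 2 * n := by
  classical
  obtain ⟨d, hd⟩ : ∃ d, n = k + d := ⟨n - k, by omega⟩
  set A : Fin t → Set (Sym2 V) := fun i => {e ∈ (f i).edgeSet | ∃ v ∈ e, v ∈ S} with hAdef
  set W : Set (Sym2 V) := {e | ¬ e.IsDiag ∧ ∀ v ∈ e, v ∈ S} with hWdef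
  set X : Set (Sym2 V) := {e | ∃ a b, e = s(a, b) ∧ a ∈ S ∧ b ∉ S} with hXdef
  -- capacity of W
  have hW : W.ncard ≤ k.choose 2 := by
    haveI : Fintype S := Fintype.ofFinite _
    have hWsub : W ⊆ Sym2.map (Subtype.val : S → V) '' ((⊤ : SimpleGraph S).edgeSet) := by
      rintro e ⟨hdiag, hv⟩
      induction e with
      | _ a b =>
        have ha : a ∈ S := hv a (Sym2.mem_mk_left _ _)
        have hb : b ∈ S := hv b (Sym2.mem_mk_right _ _)
        refine ⟨s(⟨a, ha⟩, ⟨b, hb⟩), ?_, by simp⟩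
        rw [SimpleGraph.mem_edgeSet, top_adj]
        intro hc
        exact hdiag (by simp [Subtype.ext_iff] at hc; simp [hc])
    calc W.ncard ≤ (Sym2.map (Subtype.val : S → V) '' ((⊤ : SimpleGraph S).edgeSet)).ncard :=
          Set.ncard_le_ncard hWsub (Set.toFinite _)
      _ ≤ ((⊤ : SimpleGraph S).edgeSet).ncard := Set.ncard_image_le (Set.toFinite _)
      _ = (⊤ : SimpleGraph S).edgeFinset.card := by rw [← Set.ncard_coe_finset, SimpleGraph.coe_edgeFinset]
      _ = (Fintype.card S).choose 2 := SimpleGraph.card_edgeFinset_top_eq_card_choose_two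
      _ = k.choose 2 := by
          congr 1
          rw [← Nat.card_eq_fintype_card, Nat.card_coe_set_eq, hS]
  -- capacity of X
  have hScompl : (Sᶜ : Set V).ncard = d := by
    have := Set.ncard_add_ncard_compl S (Set.toFinite _) (Set.toFinite _)
    rw [hS, Nat.card_eq_fintype_card, hn] at this
    omega
  have hX : X.ncard ≤ k * d := by
    have hXsub : X ⊆ (fun p : V × V => s(p.1, p.2)) '' (S ×ˢ (Sᶜ : Set V)) := by
      rintro e ⟨a, b, rfl, ha, hb⟩
      exact ⟨(a, b), ⟨ha, hb⟩, rfl⟩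
    calc X.ncard ≤ ((fun p : V × V => s(p.1, p.2)) '' (S ×ˢ (Sᶜ : Set V))).ncard :=
          Set.ncard_le_ncard hXsub (Set.toFinite _)
      _ ≤ (S ×ˢ (Sᶜ : Set V)).ncard := Set.ncard_image_le (Set.toFinite _)
      _ = k * d := by
          rw [← Nat.card_coe_set_eq, Nat.card_congr (Equiv.Set.prod _ _), Nat.card_prod,
            Nat.card_coe_set_eq, Nat.card_coe_set_eq, hS, hScompl]
  -- A i inside W ∪ X
  have hAU : ∀ i, A i ⊆ W ∪ X := by
    intro i e he
    obtain ⟨hee, v, hv, hvS⟩ := he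
    have hnd : ¬ e.IsDiag :=
      SimpleGraph.not_isDiag_of_mem_edgeSet _ ((f i).edgeSet_subset hee)
    induction e with
    | _ a b =>
      have hab : a ≠ b := by simpa using hnd
      rcases Sym2.mem_iff.mp hv with rfl | rfl
      · by_cases hbS : b ∈ S
        · left
          refine ⟨hnd, ?_⟩
          intro w hw
          rcases Sym2.mem_iff.mp hw with rfl | rfl <;> assumption
        · right
          exact ⟨v, b, rfl, hvS, hbS⟩
      · by_cases haS : a ∈ S
        · left
          refine ⟨hnd, ?_⟩
          intro w hw
          rcases Sym2.mem_iff.mp hw with rfl | rfl <;> assumption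
        · right
          exact ⟨v, a, Sym2.eq_swap, hvS, haS⟩
  have hAdis : ∀ i j : Fin t, i ≠ j → Disjoint (A i) (A j) := by
    intro i j hij
    exact Set.disjoint_of_subset (Set.sep_subset _ _) (Set.sep_subset _ _) (hdisj i j hij)
  -- total capacity
  have hsum : ∑ i : Fin t, (A i).ncard ≤ k.choose 2 + k * d := by
    calc ∑ i : Fin t, (A i).ncard ≤ (W ∪ X).ncard :=
          sum_ncard_le Finset.univ A (W ∪ X) (fun i _ => hAU i) (fun i _ j _ h => hAdis i j h)
      _ ≤ W.ncard + X.ncard := Set.ncard_union_le _ _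
      _ ≤ k.choose 2 + k * d := Nat.add_le_add hW hX
  -- classification
  set Bs : Finset (Fin t) := Finset.univ.filter (fun i => (f i).verts ⊆ S) with hBs
  have hBtree : ∀ i ∈ Bs, (A i).ncard = k - 1 ∧ A i ⊆ W := by
    intro i hi
    have hsubS : (f i).verts ⊆ S := by simpa [hBs] using hi
    have hveq : (f i).verts = S := le_antisymm hsubS (hst i).1
    have hAeq : A i = (f i).edgeSet := by
      apply Set.eq_of_subset_of_subset (Set.sep_subset _ _)
      intro e he
      refine ⟨he, ?_⟩
      induction e with
      | _ a b =>
        have : (f i).Adj a b := Subgraph.mem_edgeSet.mp he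
        exact ⟨a, Sym2.mem_mk_left _ _, hveq ▸ (f i).edge_vert this⟩
    have hcount := subgraph_tree_edge_count (f i) (hst i).2
    rw [hveq, hS] at hcount
    constructor
    · rw [hAeq]; omega
    · intro e he
      obtain ⟨hee, -⟩ := he
      have hnd : ¬ e.IsDiag :=
        SimpleGraph.not_isDiag_of_mem_edgeSet _ ((f i).edgeSet_subset hee)
      refine ⟨hnd, ?_⟩
      induction e with
      | _ a b =>
        have hadj : (f i).Adj a b := Subgraph.mem_edgeSet.mp hee
        intro w hw
        rcases Sym2.mem_iff.mp hw with rfl | rfl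
        · exact hveq ▸ (f i).edge_vert hadj
        · exact hveq ▸ (f i).edge_vert hadj.symm
  have hOut : ∀ i ∈ Finset.univ \ Bs, k ≤ (A i).ncard := by
    intro i hi
    have : ¬ (f i).verts ⊆ S := by
      simp only [hBs, Finset.mem_sdiff, Finset.mem_filter, Finset.mem_univ, true_and] at hi
      exact hi
    obtain ⟨r, hrv, hrS⟩ := Set.not_subset.mp this
    have := ncard_le_touching_of_tree (f i) (hst i).2 (hst i).1 (Set.toFinite S) hrv hrS
    rwa [hS] at this
  -- B-budget
  have hBbudget : Bs.card * (k - 1) ≤ k.choose 2 := by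
    have h1 : ∑ i ∈ Bs, (A i).ncard ≤ W.ncard :=
      sum_ncard_le Bs A W (fun i hi => (hBtree i hi).2) (fun i _ j _ h => hAdis i j h)
    have h2 : ∑ i ∈ Bs, (A i).ncard = Bs.card * (k - 1) := by
      rw [Finset.sum_congr rfl (fun i hi => (hBtree i hi).1), Finset.sum_const, smul_eq_mul]
    omega
  -- sum lower bound
  have hsplit : (Finset.univ \ Bs).card + Bs.card = t := by
    rw [Finset.card_sdiff_add_card_eq_card (Finset.subset_univ Bs)]
    simp
  have hlow : Bs.card * (k - 1) + (Finset.univ \ Bs).card * k ≤ ∑ i : Fin t, (A i).ncard := by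
    rw [← Finset.sum_sdiff (Finset.subset_univ Bs)]
    have hl1 : Bs.card * (k-1) = ∑ i ∈ Bs, (k-1) := by rw [Finset.sum_const, smul_eq_mul]
    have hl2 : (Finset.univ \ Bs).card * k = ∑ i ∈ Finset.univ \ Bs, k := by
      rw [Finset.sum_const, smul_eq_mul]
    rw [hl1, hl2, add_comm]
    exact Nat.add_le_add (Finset.sum_le_sum hOut)
      (Finset.sum_le_sum (fun i hi => le_of_eq (hBtree i hi).1.symm))
  -- arithmetic
  obtain ⟨k', rfl⟩ : ∃ k', k = k' + 1 := ⟨k - 1, by omega⟩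
  have hk' : 2 ≤ k' := by omega
  set B := Bs.card
  set m := (Finset.univ \ Bs).card
  have hdvd : 2 ∣ (k' + 1) * k' := by
    rw [mul_comm]; exact (Nat.even_mul_succ_self k').two_dvd
  have hchoose : 2 * ((k' + 1).choose 2) = (k' + 1) * k' := by
    rw [Nat.choose_two_right]
    simp only [Nat.add_sub_cancel]
    exact Nat.mul_div_cancel' hdvd
  -- combine
  have hmain : (k' + 1) * (2 * B + 2 * m) ≤ (k' + 1) * (k' + 1 + 2 * d) := by
    have e1 : B * (k' + 1 - 1) + m * (k' + 1) ≤ (k' + 1).choose 2 + (k' + 1) * d := by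
      calc B * (k' + 1 - 1) + m * (k' + 1) ≤ ∑ i : Fin t, (A i).ncard := hlow
        _ ≤ (k' + 1).choose 2 + (k' + 1) * d := hsum
    have e2 : B * (k' + 1 - 1) ≤ (k' + 1).choose 2 := hBbudget
    simp only [Nat.add_sub_cancel] at e1 e2
    have e3 : 2 * B ≤ k' + 1 := by
      have e4 : k' * (2 * B) ≤ k' * (k' + 1) := by
        calc k' * (2 * B) = 2 * (B * k') := by ring
          _ ≤ 2 * ((k' + 1).choose 2) := by omega
          _ = (k' + 1) * k' := hchoose
          _ = k' * (k' + 1) := by ring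
      exact Nat.le_of_mul_le_mul_left e4 (by omega)
    calc (k' + 1) * (2 * B + 2 * m) = 2 * (B * k' + m * (k' + 1)) + 2 * B := by ring
      _ ≤ 2 * ((k' + 1).choose 2 + (k' + 1) * d) + (k' + 1) := by omega
      _ = (k' + 1) * k' + 2 * ((k' + 1) * d) + (k' + 1) := by omega
      _ = (k' + 1) * (k' + 1 + 2 * d) := by ring
  have hfinal : 2 * B + 2 * m ≤ k' + 1 + 2 * d := Nat.le_of_mul_le_mul_left hmain (by omega)
  omega

end NG3

section NG4
open SimpleGraph

lemma steinerConn_attained [Fintype V] (G : SimpleGraph V) (S : Set V) (hS2 : 2 ≤ S.ncard) :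
    ∃ f : Fin (steinerConn G S) → G.Subgraph, (∀ i, IsSteinerTree G S (f i)) ∧
      ∀ i j, i ≠ j → Disjoint (f i).edgeSet (f j).edgeSet ∧
        (f i).verts ∩ (f j).verts = S := by
  classical
  set SS : Set ℕ := {n : ℕ | ∃ f : Fin n → G.Subgraph, (∀ i, IsSteinerTree G S (f i)) ∧
    ∀ i j, i ≠ j → Disjoint (f i).edgeSet (f j).edgeSet ∧
      (f i).verts ∩ (f j).verts = S} with hSS
  have h0 : 0 ∈ SS := ⟨fun i => i.elim0, fun i => i.elim0, fun i => i.elim0⟩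
  have hbdd : BddAbove SS := by
    refine ⟨Fintype.card (Sym2 V), ?_⟩
    rintro n ⟨f, hf, hd⟩
    have hedge : ∀ i, ((f i).edgeSet).Nonempty := by
      intro i
      obtain ⟨hsub, htree⟩ := hf i
      obtain ⟨a, ha, b, hb, hab⟩ := (Set.one_lt_ncard (Set.toFinite S)).mp (by omega)
      set u : (f i).verts := ⟨a, hsub ha⟩
      set v : (f i).verts := ⟨b, hsub hb⟩
      have huv : u ≠ v := fun hc => hab (congrArg Subtype.val hc)
      obtain ⟨p⟩ := htree.isConnected.preconnected u v
      obtain ⟨w, hadj, -, -⟩ := SimpleGraph.Walk.exists_eq_cons_of_ne huv p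
      exact ⟨s(a, (w : V)), Subgraph.mem_edgeSet.mpr hadj⟩
    set g : Fin n → Sym2 V := fun i => (hedge i).choose with hg
    have hginj : Function.Injective g := by
      intro i j hij
      by_contra hne
      have h1 : g i ∈ (f i).edgeSet := (hedge i).choose_spec
      have h2 : g j ∈ (f j).edgeSet := (hedge j).choose_spec
      rw [hij] at h1
      exact Set.disjoint_left.mp ((hd i j hne).1) h1 h2
    simpa using Fintype.card_le_of_injective g hginj
  have := Nat.sSup_mem ⟨0, h0⟩ hbdd
  exact this

end NG4


theorem nordhausGaddum_prod {V : Type*} [Fintype V] (G : SimpleGraph V) (n k : ℕ)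
    (hn : Fintype.card V = n) (h3 : 3 ≤ k) (hkn : k ≤ n) :
    0 ≤ genConn G k * genConn Gᶜ k ∧
    ((genConn G k * genConn Gᶜ k : ℕ) : ℚ) ≤ (((n - (k + 1) / 2 : ℕ) : ℚ) / 2) ^ 2 := by
  classical
  refine ⟨Nat.zero_le _, ?_⟩
  obtain ⟨s₀, -, hs₀⟩ := Finset.exists_subset_card_eq
    (show k ≤ (Finset.univ : Finset V).card by simpa [hn] using hkn)
  set S : Set V := ↑s₀ with hSdef
  have hS : S.ncard = k := by rw [hSdef, Set.ncard_coe_finset, hs₀]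
  have hS2 : 2 ≤ S.ncard := by omega
  set a := steinerConn G S with ha
  set b := steinerConn Gᶜ S with hb
  obtain ⟨g, hg, hgd⟩ := steinerConn_attained G S hS2
  obtain ⟨h, hh, hhd⟩ := steinerConn_attained Gᶜ S hS2
  have hGG' : Disjoint G.edgeSet Gᶜ.edgeSet := by
    rw [Set.disjoint_iff_inter_eq_empty, ← SimpleGraph.edgeSet_inf, inf_compl_eq_bot,
      SimpleGraph.edgeSet_bot]
  let F : Fin (a + b) → (⊤ : SimpleGraph V).Subgraph := fun i =>
    if hi : (i : ℕ) < a then liftTop (g ⟨i, hi⟩)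
    else liftTop (h ⟨(i : ℕ) - a, by have := i.isLt; omega⟩)
  have hFst : ∀ i, IsSteinerTree ⊤ S (F i) := by
    intro i
    by_cases hi : (i : ℕ) < a
    · simp only [F, dif_pos hi]; exact liftTop_isSteinerTree (hg _)
    · simp only [F, dif_neg hi]; exact liftTop_isSteinerTree (hh _)
  have hFd : ∀ i j : Fin (a + b), i ≠ j → Disjoint (F i).edgeSet (F j).edgeSet := by
    intro i j hij
    by_cases hi : (i : ℕ) < a <;> by_cases hj : (j : ℕ) < a
    · simp only [F, dif_pos hi, dif_pos hj, liftTop_edgeSet]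
      refine (hgd _ _ ?_).1
      intro hc; apply hij; apply Fin.ext; simpa using congrArg Fin.val hc
    · simp only [F, dif_pos hi, dif_neg hj, liftTop_edgeSet]
      exact Set.disjoint_of_subset (Subgraph.edgeSet_subset _) (Subgraph.edgeSet_subset _) hGG'
    · simp only [F, dif_neg hi, dif_pos hj, liftTop_edgeSet]
      exact Set.disjoint_of_subset (Subgraph.edgeSet_subset _) (Subgraph.edgeSet_subset _) hGG'.symm
    · simp only [F, dif_neg hi, dif_neg hj, liftTop_edgeSet]
      refine (hhd _ _ ?_).1
      intro hc; apply hij; apply Fin.ext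
      have hv : (i : ℕ) - a = (j : ℕ) - a := congrArg Fin.val hc
      have h1 := i.isLt; have h2 := j.isLt
      omega
  have hcount := key_count hS h3 hn hkn F hFst hFd
  have ht : a + b ≤ n - (k + 1) / 2 := by omega
  have hg1 : genConn G k ≤ a := Nat.sInf_le ⟨S, hS, rfl⟩
  have hg2 : genConn Gᶜ k ≤ b := Nat.sInf_le ⟨S, hS, rfl⟩
  have hprod : 4 * (genConn G k * genConn Gᶜ k) ≤ (n - (k + 1) / 2) ^ 2 := by
    have h4 : 4 * (a * b) ≤ (a + b) ^ 2 := by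
      zify
      nlinarith [sq_nonneg ((a : ℤ) - b)]
    calc 4 * (genConn G k * genConn Gᶜ k) ≤ 4 * (a * b) :=
          Nat.mul_le_mul_left 4 (Nat.mul_le_mul hg1 hg2)
      _ ≤ (a + b) ^ 2 := h4
      _ ≤ (n - (k + 1) / 2) ^ 2 := Nat.pow_le_pow_left ht 2
  rw [div_pow, le_div_iff₀ (by norm_num : (0 : ℚ) < 2 ^ 2)]
  have : ((genConn G k * genConn Gᶜ k : ℕ) : ℚ) * 2 ^ 2
      = ((4 * (genConn G k * genConn Gᶜ k) : ℕ) : ℚ) := by push_cast; ring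
  rw [this]
  exact_mod_cast Nat.cast_le.mpr hprod
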